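/- Let A : [0,1] → M_{n×n}(ℂ) be a continuous family of Hermitian positive-semidefinite matrices such that for every t ∈ [0,1] the matrix A_t has exactly m nonzero eigenvalues and these are pairwise distinct: μ₁(t) > μ₂(t) > ⋯ > μ_m(t) > 0. Then there exist continuous maps v₁, …, v_m : [0,1] → ℂⁿ such that for every t ∈ [0,1] the vectors v₁(t), …, v_m(t) form an orthonormal system and A_t v_k(t) = μ_k(t) v_k(t) for each k = 1, …, m. -/

import Mathlib

open MeasureTheory Complex ContinuousLinearMap
open scoped ComplexConjugate ENNReal NNReal

noncomputable section

/-! Basic setup: the unit circle `𝕋 = Circle ⊆ ℂ` with its Borel σ-algebra and its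
normalized arc-length (Haar) probability measure `μc`; the spaces `L²(𝕋, ℂⁿ)` and the
Hardy spaces `H²(ℂⁿ)`; shifts, matrix- (i.e. operator-) valued functions on the circle,
their Fourier coefficients, inner functions and analytic extensions into the unit disk. -/

instance : MeasurableSpace Circle := borel Circle
instance : BorelSpace Circle := ⟨rfl⟩
instance : Fact (0 < 2 * Real.pi) := ⟨by positivity⟩

/-- The normalized arc-length (Haar) probability measure on the unit circle `𝕋`. -/
def μc : Measure Circle :=
  Measure.map AddCircle.homeomorphCircle' AddCircle.haarAddCircle

/-- `ℂⁿ` as a (finite dimensional) Hilbert space. -/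
abbrev Cn (n : ℕ) := EuclideanSpace ℂ (Fin n)

/-- `L²(𝕋, ℂⁿ)`. -/
abbrev L2 (n : ℕ) := Lp (Cn n) 2 μc

/-- The `k`-th Fourier coefficient `f̂(k) = ∫_𝕋 f(z) z̄ᵏ dμ` of a `ℂⁿ`-valued function. -/
def fc {n : ℕ} (f : Circle → Cn n) (k : ℤ) : Cn n :=
  ∫ z, ((starRingEnd ℂ) (z : ℂ)) ^ k • f z ∂μc

/-- The Hardy space `H²(ℂⁿ)`, as a subset of `L²(𝕋, ℂⁿ)`: those `f` whose Fourier
coefficients `f̂(k)` vanish for all `k < 0`. -/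
def H2 (n : ℕ) : Set (L2 n) :=
  {f | ∀ k : ℤ, k < 0 → fc (f : Circle → Cn n) k = 0}

/-- A set `M ⊆ L²(𝕋, ℂⁿ)` is invariant under the shift `U` (multiplication by the
coordinate function `z`): for every `f ∈ M`, the element `U f` (i.e. the element of `L²`
represented by `z ↦ z • f(z)`) again belongs to `M`. -/
def ShiftInv {n : ℕ} (M : Set (L2 n)) : Prop :=
  ∀ f ∈ M, ∃ g ∈ M, (g : Circle → Cn n) =ᵐ[μc] fun z => (z : ℂ) • (f : Circle → Cn n) z

/-- Invariance of `M ⊆ L²(𝕋, ℂⁿ)` under the adjoint `U*` of the bilateral shift,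
i.e. multiplication by `z̄`. -/
def ShiftStarInv {n : ℕ} (M : Set (L2 n)) : Prop :=
  ∀ f ∈ M, ∃ g ∈ M,
    (g : Circle → Cn n) =ᵐ[μc] fun z => ((starRingEnd ℂ) (z : ℂ)) • (f : Circle → Cn n) z

/-- The image `U M` of a set `M ⊆ L²(𝕋, ℂⁿ)` under the shift (multiplication by `z`). -/
def Sset {n : ℕ} (M : Set (L2 n)) : Set (L2 n) :=
  {g | ∃ f ∈ M, (g : Circle → Cn n) =ᵐ[μc] fun z => (z : ℂ) • (f : Circle → Cn n) z}

/-- The image `Uᵏ M` of a set `M ⊆ L²(𝕋, ℂⁿ)` under the `k`-th power of the shift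
(multiplication by `zᵏ`). -/
def shiftPow {n : ℕ} (k : ℕ) (M : Set (L2 n)) : Set (L2 n) :=
  {g | ∃ f ∈ M, (g : Circle → Cn n) =ᵐ[μc] fun z => ((z : ℂ) ^ k) • (f : Circle → Cn n) z}

/-- Multiplication of a set `A ⊆ L²(𝕋, ℂᵐ)` by a matrix- (operator-) valued function `G`
on the circle: `G·A = {G·f : f ∈ A}` inside `L²(𝕋, ℂⁿ)`. -/
def mulSet {m n : ℕ} (G : Circle → (Cn m →L[ℂ] Cn n)) (A : Set (L2 m)) : Set (L2 n) :=
  {h | ∃ f ∈ A, (h : Circle → Cn n) =ᵐ[μc] fun z => G z ((f : Circle → Cn m) z)}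

/-- The `k`-th matrix Fourier coefficient `Ĝ(k) = ∫_𝕋 G(z) z̄ᵏ dμ` of a matrix-valued
function on the circle. -/
def fcM {m n : ℕ} (G : Circle → (Cn m →L[ℂ] Cn n)) (k : ℤ) : Cn m →L[ℂ] Cn n :=
  ∫ z, ((starRingEnd ℂ) (z : ℂ)) ^ k • G z ∂μc

/-- An inner function from `ℂᵐ` to `ℂⁿ`: a measurable, essentially bounded, matrix-valued
function `G` on `𝕋` with `G(z)*G(z) = Iₘ` for a.e. `z` and all negative matrix Fourier
coefficients vanishing. -/
def IsInner {m n : ℕ} (G : Circle → (Cn m →L[ℂ] Cn n)) : Prop :=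
  Measurable G ∧ (∃ C : ℝ, ∀ᵐ z ∂μc, ‖G z‖ ≤ C) ∧
    (∀ᵐ z ∂μc, (ContinuousLinearMap.adjoint (G z)).comp (G z) = ContinuousLinearMap.id ℂ (Cn m)) ∧
    (∀ k : ℤ, k < 0 → fcM G k = 0)

/-- The analytic extension `G(λ) = Σ_{k ≥ 0} Ĝ(k) λᵏ` of a matrix-valued function on the
circle to a point `λ` of the open unit disk. -/
def ext {m n : ℕ} (G : Circle → (Cn m →L[ℂ] Cn n)) (lam : ℂ) : Cn m →L[ℂ] Cn n :=
  ∑' k : ℕ, lam ^ k • fcM G (k : ℤ)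

/-- The analytic extension `h(λ) = Σ_{k ≥ 0} ĥ(k) λᵏ` of a vector-valued function on the
circle to a point `λ` of the open unit disk. -/
def extV {n : ℕ} (h : Circle → Cn n) (lam : ℂ) : Cn n :=
  ∑' k : ℕ, lam ^ k • fc h (k : ℤ)

/-- The orthogonal projection of `ℂⁿ` onto a subspace `N`, as an endomorphism of `ℂⁿ`. -/
def projOn {n : ℕ} (N : Submodule ℂ (Cn n)) : Cn n →L[ℂ] Cn n :=
  N.subtypeL.comp N.orthogonalProjectionOnto

/-- A bounded operator `p` on a Hilbert space is an orthogonal projection iff it is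
idempotent and self-adjoint. -/
def IsOrthoProj {E : Type*} [NormedAddCommGroup E] [InnerProductSpace ℂ E] [CompleteSpace E]
    (p : E →L[ℂ] E) : Prop :=
  p.comp p = p ∧ ContinuousLinearMap.adjoint p = p

/-- `H²(N)` for a subspace `N ⊆ ℂⁿ`: those `f ∈ H²(ℂⁿ)` with `f(z) ∈ N` for a.e. `z`. -/
def H2N {n : ℕ} (N : Submodule ℂ (Cn n)) : Set (L2 n) :=
  {f | f ∈ H2 n ∧ ∀ᵐ z ∂μc, (f : Circle → Cn n) z ∈ N}


/-! ### Auxiliary machinery for the continuous eigenvector selection theorem -/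

set_option maxHeartbeats 1600000

namespace CES

open Module

variable {n m : ℕ}

def eb (T : Cn n →L[ℂ] Cn n) (hT : LinearMap.IsSymmetric (T : Cn n →ₗ[ℂ] Cn n)) :
    OrthonormalBasis (Fin n) ℂ (Cn n) :=
  hT.eigenvectorBasis finrank_euclideanSpace_fin

def ev (T : Cn n →L[ℂ] Cn n) (hT : LinearMap.IsSymmetric (T : Cn n →ₗ[ℂ] Cn n)) (i : Fin n) : ℝ :=
  hT.eigenvalues finrank_euclideanSpace_fin i

variable {T : Cn n →L[ℂ] Cn n} (hT : LinearMap.IsSymmetric (T : Cn n →ₗ[ℂ] Cn n))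

variable {T : Cn n →L[ℂ] Cn n} (hT : LinearMap.IsSymmetric (T : Cn n →ₗ[ℂ] Cn n))

lemma apply_eb (i : Fin n) : T (eb T hT i) = (ev T hT i : ℂ) • eb T hT i := by
  simp only [eb, ev]
  exact hT.apply_eigenvectorBasis finrank_euclideanSpace_fin i

lemma repr_T_apply (x : Cn n) (i : Fin n) :
    (eb T hT).repr (T x) i = (ev T hT i : ℂ) * (eb T hT).repr x i := by
  have := hT.eigenvectorBasis_apply_self_apply finrank_euclideanSpace_fin x i
  simpa [eb, ev] using this

lemma eig_coeff {c : ℂ} {x : Cn n} (hx : T x = c • x) {i : Fin n}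
    (hi : (ev T hT i : ℂ) ≠ c) : (eb T hT).repr x i = 0 := by
  have h1 : (eb T hT).repr (T x) i = (ev T hT i : ℂ) * (eb T hT).repr x i :=
    repr_T_apply hT x i
  have h2 : (eb T hT).repr (T x) i = c * (eb T hT).repr x i := by
    rw [hx, _root_.map_smul]
    rfl
  have := h1.symm.trans h2
  rcases mul_eq_mul_right_iff.mp this with h | h
  · exact absurd h hi
  · exact h

lemma eig_exists {c : ℂ} {x : Cn n} (hx0 : x ≠ 0) (hx : T x = c • x) :
    ∃ i, (ev T hT i : ℂ) = c := by
  by_contra h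
  push_neg at h
  apply hx0
  have : ∀ i, (eb T hT).repr x i = 0 := fun i => eig_coeff hT hx (h i)
  have hz : (eb T hT).repr x = 0 := by
    ext i; exact this i
  simpa using congrArg (eb T hT).repr.symm hz

lemma norm_lower_bound {c d : ℝ} (hd : ∀ i, d ≤ |c - ev T hT i|) (x : Cn n) :
    d * ‖x‖ ≤ ‖T x - (c : ℂ) • x‖ := by
  rcases le_or_gt d 0 with h | h
  · calc d * ‖x‖ ≤ 0 := mul_nonpos_of_nonpos_of_nonneg h (norm_nonneg x)
    _ ≤ _ := norm_nonneg _
  set b := eb T hT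
  have hrepr : ∀ i, b.repr (T x - (c : ℂ) • x) i
      = ((ev T hT i : ℂ) - c) * b.repr x i := by
    intro i
    rw [map_sub, _root_.map_smul]
    have h0 := repr_T_apply hT x i
    simp only [b, PiLp.sub_apply, PiLp.smul_apply, smul_eq_mul] at h0 ⊢
    rw [h0]
    ring
  have hsq : ∀ (y : Cn n), ‖y‖ ^ 2 = ∑ i, ‖b.repr y i‖ ^ 2 := by
    intro y
    have : ‖y‖ = Real.sqrt (∑ i, ‖b.repr y i‖ ^ 2) := by
      rw [← b.repr.norm_map y, EuclideanSpace.norm_eq]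
    rw [this, Real.sq_sqrt (by positivity)]
  have key : (d * ‖x‖) ^ 2 ≤ ‖T x - (c : ℂ) • x‖ ^ 2 := by
    rw [mul_pow, hsq x, hsq (T x - (c : ℂ) • x), Finset.mul_sum]
    apply Finset.sum_le_sum
    intro i _
    rw [hrepr i]
    have h1 : ‖((ev T hT i : ℂ) - c) * b.repr x i‖ = |ev T hT i - c| * ‖b.repr x i‖ := by
      rw [norm_mul, show ((ev T hT i : ℂ) - c) = ((ev T hT i - c : ℝ) : ℂ) by push_cast; ring,
        Complex.norm_real, Real.norm_eq_abs]
    rw [h1, mul_pow]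
    have hd' : d ≤ |ev T hT i - c| := by rw [abs_sub_comm]; exact hd i
    have : d ^ 2 ≤ |ev T hT i - c| ^ 2 := by nlinarith [abs_nonneg (ev T hT i - c)]
    nlinarith [norm_nonneg (b.repr x i), sq_nonneg ‖b.repr x i‖]
  nlinarith [norm_nonneg (T x - (c : ℂ) • x), norm_nonneg x, mul_nonneg h.le (norm_nonneg x)]


/-- the list of indices `≠ k` -/
def lagList (m : ℕ) (k : Fin m) : List (Fin m) :=
  (List.finRange m).filter (fun j => j ≠ k)

def scalarAt (mu : Fin m → ℝ) (k : Fin m) (c : ℂ) : ℂ :=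
  c * ((lagList m k).map (fun j => c - (mu j : ℂ))).prod

def lagProj (T : Cn n →L[ℂ] Cn n) (mu : Fin m → ℝ) (k : Fin m) : Cn n →L[ℂ] Cn n :=
  (scalarAt mu k (mu k))⁻¹ •
    (((lagList m k).map (fun j => T - (mu j : ℂ) • (1 : Cn n →L[ℂ] Cn n))).prod * T)

lemma scalarAt_base_ne_zero {mu : Fin m → ℝ} {k : Fin m} (hpos : 0 < mu k)
    (hdist : ∀ j, j ≠ k → mu j ≠ mu k) : scalarAt mu k (mu k) ≠ 0 := by
  apply mul_ne_zero
  · exact_mod_cast hpos.ne'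
  · apply List.prod_ne_zero
    intro h0
    rcases List.mem_map.mp h0 with ⟨j, hj, hj0⟩
    have hjk : j ≠ k := by
      have := List.mem_filter.mp hj
      simpa using this.2
    exact hdist j hjk (by exact_mod_cast (sub_eq_zero.mp hj0).symm)

lemma scalarAt_zero {mu : Fin m → ℝ} {k : Fin m} : scalarAt mu k 0 = 0 := by
  simp [scalarAt]

lemma scalarAt_other {mu : Fin m → ℝ} {k j : Fin m} (hjk : j ≠ k) :
    scalarAt mu k (mu j) = 0 := by
  apply mul_eq_zero_of_right
  apply List.prod_eq_zero
  apply List.mem_map.mpr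
  refine ⟨j, ?_, by ring⟩
  simp [lagList, List.mem_filter, hjk, List.mem_finRange]

lemma listprod_apply {T : Cn n →L[ℂ] Cn n} {mu : Fin m → ℝ} {c : ℂ} {x : Cn n}
    (hx : T x = c • x) : ∀ l : List (Fin m),
    ((l.map (fun j => T - (mu j : ℂ) • (1 : Cn n →L[ℂ] Cn n))).prod) x
      = ((l.map (fun j => c - (mu j : ℂ))).prod) • x := by
  intro l
  induction l with
  | nil => simp
  | cons j l ih =>
    simp only [List.map_cons, List.prod_cons]
    rw [ContinuousLinearMap.mul_apply, ih]
    rw [_root_.map_smul, ContinuousLinearMap.sub_apply, hx, ContinuousLinearMap.smul_apply,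
      ContinuousLinearMap.one_apply, ← sub_smul, smul_smul, mul_comm]

lemma lagProj_apply_eig {T : Cn n →L[ℂ] Cn n} {mu : Fin m → ℝ} {k : Fin m} {c : ℂ} {x : Cn n}
    (hx : T x = c • x) :
    lagProj T mu k x = ((scalarAt mu k (mu k))⁻¹ * scalarAt mu k c) • x := by
  simp only [lagProj, ContinuousLinearMap.smul_apply, ContinuousLinearMap.mul_apply, hx,
    _root_.map_smul, listprod_apply hx]
  rw [smul_smul, smul_smul]
  congr 1
  simp only [scalarAt]
  ring

lemma lagProj_fix {T : Cn n →L[ℂ] Cn n} {mu : Fin m → ℝ} {k : Fin m} {x : Cn n}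
    (hne : scalarAt mu k (mu k) ≠ 0) (hx : T x = ((mu k : ℝ) : ℂ) • x) :
    lagProj T mu k x = x := by
  rw [lagProj_apply_eig hx, inv_mul_cancel₀ hne, one_smul]

lemma classify {T : Cn n →L[ℂ] Cn n} (hT : LinearMap.IsSymmetric (T : Cn n →ₗ[ℂ] Cn n))
    {mu : Fin m → ℝ}
    (heig1 : ∀ c : ℂ, c ≠ 0 → (∃ x, x ≠ 0 ∧ T x = c • x) → ∃ j, c = ((mu j : ℝ) : ℂ)) :
    ∀ i, ev T hT i = 0 ∨ ∃ j, ev T hT i = mu j := by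
  intro i
  rcases eq_or_ne (ev T hT i) 0 with h | h
  · exact Or.inl h
  · right
    have hbne : eb T hT i ≠ 0 := (eb T hT).orthonormal.ne_zero i
    rcases heig1 (ev T hT i) (by exact_mod_cast h) ⟨eb T hT i, hbne, apply_eb hT i⟩ with ⟨j, hj⟩
    exact ⟨j, by exact_mod_cast hj⟩

lemma T_comp_lagProj {T : Cn n →L[ℂ] Cn n} (hT : LinearMap.IsSymmetric (T : Cn n →ₗ[ℂ] Cn n))
    {mu : Fin m → ℝ} {k : Fin m}
    (hclass : ∀ i, ev T hT i = 0 ∨ ∃ j, ev T hT i = mu j)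
    (hdist : ∀ j l : Fin m, j ≠ l → mu j ≠ mu l) :
    T ∘L lagProj T mu k = ((mu k : ℝ) : ℂ) • lagProj T mu k := by
  apply ContinuousLinearMap.coe_injective
  apply Basis.ext (eb T hT).toBasis
  intro i
  simp only [OrthonormalBasis.coe_toBasis, ContinuousLinearMap.coe_coe,
    ContinuousLinearMap.comp_apply, ContinuousLinearMap.smul_apply]
  have hev := apply_eb hT i
  rw [lagProj_apply_eig hev]
  set s := (scalarAt mu k (mu k))⁻¹ * scalarAt mu k (ev T hT i) with hs
  rcases eq_or_ne s 0 with h0 | h0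
  · simp [h0]
  · have hval : ev T hT i = mu k := by
      have hsc : scalarAt mu k ((ev T hT i : ℝ) : ℂ) ≠ 0 := by
        intro hc; exact h0 (by rw [hs, hc, mul_zero])
      rcases hclass i with h | ⟨j, hj⟩
      · exact absurd (by rw [h]; exact_mod_cast scalarAt_zero) hsc
      · rcases eq_or_ne j k with rfl | hjk
        · exact hj
        · exact absurd (by rw [hj]; exact scalarAt_other hjk) hsc
    rw [_root_.map_smul, hev, hval, smul_smul, smul_smul, mul_comm]

lemma lagProj_idem {T : Cn n →L[ℂ] Cn n} (hT : LinearMap.IsSymmetric (T : Cn n →ₗ[ℂ] Cn n))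
    {mu : Fin m → ℝ} {k : Fin m}
    (hclass : ∀ i, ev T hT i = 0 ∨ ∃ j, ev T hT i = mu j)
    (hdist : ∀ j l : Fin m, j ≠ l → mu j ≠ mu l)
    (hne : scalarAt mu k (mu k) ≠ 0) (x : Cn n) :
    lagProj T mu k (lagProj T mu k x) = lagProj T mu k x := by
  apply lagProj_fix hne
  have := congrArg (fun (S : Cn n →L[ℂ] Cn n) => S x) (T_comp_lagProj hT hclass hdist (k := k))
  simpa using this

lemma lagProj_continuous {X : Type*} [TopologicalSpace X]
    (A : X → Cn n →L[ℂ] Cn n) (mu : X → Fin m → ℝ) (k : Fin m)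
    (hA : Continuous A) (hmu : ∀ j, Continuous fun t => mu t j)
    (hne : ∀ t, scalarAt (mu t) k (mu t k) ≠ 0) :
    Continuous fun t => lagProj (A t) (mu t) k := by
  have hmuC : ∀ j, Continuous fun t => ((mu t j : ℝ) : ℂ) := fun j =>
    Complex.continuous_ofReal.comp (hmu j)
  have hscal : Continuous fun t => scalarAt (mu t) k (mu t k) := by
    apply (hmuC k).mul
    exact continuous_list_prod _ (fun j _ => (hmuC k).sub (hmuC j))
  apply Continuous.smul (hscal.inv₀ hne)
  apply Continuous.mul _ hA
  exact continuous_list_prod _ (fun j _ => hA.sub ((hmuC j).smul continuous_const))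

lemma eig_perturb [Nonempty (Fin n)] {T₁ T₂ : Cn n →L[ℂ] Cn n}
    (hT₂ : LinearMap.IsSymmetric (T₂ : Cn n →ₗ[ℂ] Cn n)) {c : ℝ} {x : Cn n}
    (hx0 : x ≠ 0) (hx : T₁ x = (c : ℂ) • x) :
    ∃ i, |c - ev T₂ hT₂ i| ≤ ‖T₁ - T₂‖ := by
  by_contra h
  push_neg at h
  have hd : ∀ i, ‖T₁ - T₂‖ < |c - ev T₂ hT₂ i| := h
  set d := Finset.univ.inf' Finset.univ_nonempty (fun i => |c - ev T₂ hT₂ i|) with hdd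
  have hd1 : ∀ i, d ≤ |c - ev T₂ hT₂ i| := fun i => Finset.inf'_le _ (Finset.mem_univ i)
  have hd2 : ‖T₁ - T₂‖ < d := by
    rw [hdd, Finset.lt_inf'_iff]
    exact fun i _ => hd i
  have h1 : d * ‖x‖ ≤ ‖T₂ x - (c : ℂ) • x‖ := norm_lower_bound hT₂ hd1 x
  have h2 : ‖T₂ x - (c : ℂ) • x‖ = ‖(T₂ - T₁) x‖ := by
    rw [ContinuousLinearMap.sub_apply, hx]
  have h3 : ‖(T₂ - T₁) x‖ ≤ ‖T₁ - T₂‖ * ‖x‖ := by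
    calc ‖(T₂ - T₁) x‖ ≤ ‖T₂ - T₁‖ * ‖x‖ := (T₂ - T₁).le_opNorm x
    _ = ‖T₁ - T₂‖ * ‖x‖ := by rw [norm_sub_rev]
  have hxpos : 0 < ‖x‖ := norm_pos_iff.mpr hx0
  nlinarith
lemma eig_close {S T : Cn n →L[ℂ] Cn n}
    (hS : LinearMap.IsSymmetric (S : Cn n →ₗ[ℂ] Cn n))
    {muS muT : Fin m → ℝ}
    (hposT : ∀ j, 0 < muT j)
    (hdecS : ∀ k l : Fin m, k < l → muS l < muS k)
    (hdecT : ∀ k l : Fin m, k < l → muT l < muT k)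
    (heig2T : ∀ k, ∃ x : Cn n, x ≠ 0 ∧ T x = ((muT k : ℝ) : ℂ) • x)
    (heig1S : ∀ c : ℂ, c ≠ 0 → (∃ x, x ≠ 0 ∧ S x = c • x) → ∃ j, c = ((muS j : ℝ) : ℂ))
    {gap : ℝ} (hgap1 : ∀ j, gap ≤ muT j)
    (hgap2 : ∀ j l : Fin m, j < l → muT l + gap ≤ muT j)
    (hsmall : 3 * ‖T - S‖ < gap) :
    ∀ k, |muT k - muS k| ≤ ‖T - S‖ := by
  set ε := ‖T - S‖ with hε
  have hε0 : 0 ≤ ε := norm_nonneg _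
  rcases Nat.eq_zero_or_pos m with rfl | hm
  · exact fun k => k.elim0
  have hne : Nonempty (Fin m) := Fin.pos_iff_nonempty.mp hm
  have hn : Nonempty (Fin n) := by
    obtain ⟨x, hx0, -⟩ := heig2T ⟨0, hm⟩
    by_contra hemp
    have : IsEmpty (Fin n) := not_nonempty_iff.mp hemp
    exact hx0 (Subsingleton.elim x 0)
  -- for each j there is k' with |muT j - muS k'| ≤ ε
  have hτ : ∀ j : Fin m, ∃ k', |muT j - muS k'| ≤ ε := by
    intro j
    obtain ⟨x, hx0, hx⟩ := heig2T j
    obtain ⟨i, hi⟩ := eig_perturb hS hx0 hx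
    rcases classify hS heig1S i with h0 | ⟨k', hk'⟩
    · exfalso
      rw [h0, sub_zero] at hi
      have : muT j ≤ ε := le_trans (le_abs_self _) hi
      have : gap ≤ ε := le_trans (hgap1 j) this
      linarith
    · exact ⟨k', by rw [← hk']; exact hi⟩
  choose τ hτ' using hτ
  have hmono : StrictMono τ := by
    intro j j' hjj
    have h1 : muS (τ j) ≥ muT j - ε := by
      have := abs_le.mp (hτ' j); linarith [this.2]
    have h2 : muS (τ j') ≤ muT j' + ε := by
      have := abs_le.mp (hτ' j'); linarith [this.1]
    have h3 : muT j' + gap ≤ muT j := hgap2 j j' hjj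
    have : muS (τ j') < muS (τ j) := by linarith
    by_contra hle
    push_neg at hle
    rcases lt_or_eq_of_le hle with hlt | heq
    · exact absurd (hdecS _ _ hlt) (by linarith)
    · rw [heq] at this; exact lt_irrefl _ this
  have hid : τ = _root_.id := by
    have hinj : Function.Injective τ := hmono.injective
    have hsurj : Function.Surjective τ := Finite.surjective_of_injective hinj
    have hwf : WellFoundedLT (Fin m) := Finite.to_wellFoundedLT
    have := hmono.range_inj (g := (_root_.id : Fin m → Fin m)) strictMono_id
    rw [show Set.range (_root_.id : Fin m → Fin m) = Set.univ from Set.range_id] at this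
    exact this.mp (Set.range_eq_univ.mpr hsurj)
  intro k
  have := hτ' k
  rw [hid] at this
  exact this

lemma exists_gap (mu : Fin m → ℝ) (hpos : ∀ j, 0 < mu j)
    (hdec : ∀ k l : Fin m, k < l → mu l < mu k) (hm : 0 < m) :
    ∃ gap > 0, (∀ j, gap ≤ mu j) ∧ (∀ j l : Fin m, j < l → mu l + gap ≤ mu j) := by
  have hne : Nonempty (Fin m) := Fin.pos_iff_nonempty.mp hm
  set f : Fin m → ℝ := fun j => mu j - (if h : (j : ℕ) + 1 < m then mu ⟨(j : ℕ) + 1, h⟩ else 0)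
    with hf
  have hfpos : ∀ j, 0 < f j := by
    intro j
    rw [hf]
    dsimp only
    split_ifs with h
    · have : (j : Fin m) < ⟨(j : ℕ) + 1, h⟩ := by
        rw [Fin.lt_def]; simp
      linarith [hdec _ _ this]
    · linarith [hpos j]
  refine ⟨Finset.univ.inf' Finset.univ_nonempty f, ?_, ?_, ?_⟩
  · rw [gt_iff_lt, Finset.lt_inf'_iff]
    exact fun j _ => hfpos j
  · intro j
    refine le_trans (Finset.inf'_le _ (Finset.mem_univ j)) ?_
    rw [hf]
    dsimp only
    split_ifs with h
    · linarith [hpos ⟨(j : ℕ) + 1, h⟩]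
    · linarith
  · intro j l hjl
    have hj1 : (j : ℕ) + 1 < m := lt_of_le_of_lt (Nat.succ_le_of_lt hjl) l.isLt
    have h1 : Finset.univ.inf' Finset.univ_nonempty f ≤ mu j - mu ⟨(j : ℕ) + 1, hj1⟩ := by
      refine le_trans (Finset.inf'_le _ (Finset.mem_univ j)) ?_
      rw [hf]; dsimp only; rw [dif_pos hj1]
    have h2 : mu l ≤ mu ⟨(j : ℕ) + 1, hj1⟩ := by
      rcases eq_or_lt_of_le (show ((j : ℕ) + 1 : ℕ) ≤ (l : ℕ) from Nat.succ_le_of_lt hjl) with h | h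
      · have : (⟨(j : ℕ) + 1, hj1⟩ : Fin m) = l := by apply Fin.ext; exact h
        rw [this]
      · exact le_of_lt (hdec _ _ (by rwa [Fin.lt_def]))
    linarith

lemma glue (Q : Set.Icc (0:ℝ) 1 → Cn n →L[ℂ] Cn n) (hQ : Continuous Q)
    (hfix : ∀ t x, Q t (Q t x) = Q t x)
    (u₀ : Cn n) (hu₀ : ‖u₀‖ = 1)
    (hQu₀ : Q ⟨0, by norm_num⟩ u₀ = u₀) :
    ∃ v : Set.Icc (0:ℝ) 1 → Cn n, Continuous v ∧ ∀ t, ‖v t‖ = 1 ∧ Q t (v t) = v t := by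
  have hUC : UniformContinuous Q := CompactSpace.uniformContinuous_of_continuous hQ
  rcases Metric.uniformContinuous_iff.mp hUC (1/2) (by norm_num) with ⟨δ, hδ0, hδ⟩
  obtain ⟨N, hN⟩ := exists_nat_one_div_lt hδ0
  set Nr : ℝ := (N : ℝ) + 1 with hNr
  have hN1 : (1 : ℝ) / Nr < δ := hN
  have hNr0 : 0 < Nr := by positivity
  have main : ∀ i : ℕ, (i : ℝ) ≤ Nr → ∃ v : Set.Icc (0:ℝ) 1 → Cn n, Continuous v ∧
      ∀ t : Set.Icc (0:ℝ) 1, (t : ℝ) ≤ i / Nr → (‖v t‖ = 1 ∧ Q t (v t) = v t) := by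
    intro i
    induction i with
    | zero =>
      intro _
      refine ⟨fun _ => u₀, continuous_const, ?_⟩
      intro t ht
      have ht0 : (t : ℝ) = 0 := le_antisymm (by simpa using ht) t.2.1
      have : t = ⟨0, by norm_num⟩ := Subtype.ext ht0
      rw [this]
      exact ⟨hu₀, hQu₀⟩
    | succ i ih =>
      intro hi1
      obtain ⟨v, hvc, hvp⟩ := ih (by push_cast at hi1 ⊢; linarith)
      set a : ℝ := (i : ℝ) / Nr with ha
      set b : ℝ := ((i : ℝ) + 1) / Nr with hb
      have ha0 : 0 ≤ a := by positivity
      have hab : a ≤ b := by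
        rw [ha, hb]
        gcongr
        linarith
      have hb0 : 0 ≤ b := le_trans ha0 hab
      have hb1 : b ≤ 1 := by
        rw [hb, div_le_one hNr0]
        push_cast at hi1 ⊢
        linarith
      have ha1 : a ≤ 1 := le_trans hab hb1
      have hba : b - a = 1 / Nr := by rw [ha, hb]; ring
      set pa : Set.Icc (0:ℝ) 1 := ⟨a, ha0, ha1⟩ with hpa
      set c : Cn n := v pa with hc
      have hc1 : ‖c‖ = 1 := (hvp pa (le_refl _)).1
      have hc2 : Q pa c = c := (hvp pa (le_refl _)).2
      set clamp : Set.Icc (0:ℝ) 1 → Set.Icc (0:ℝ) 1 :=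
        fun t => ⟨min (max (t : ℝ) a) b,
          le_min (le_trans ha0 (le_max_right _ _)) hb0, le_trans (min_le_right _ _) hb1⟩
        with hclamp
      have hclampc : Continuous clamp :=
        (((continuous_subtype_val.max continuous_const).min continuous_const).subtype_mk _)
      have hclamp_pa : clamp pa = pa := by
        apply Subtype.ext
        show min (max a a) b = a
        rw [max_self, min_eq_left hab]
      have hdistc : ∀ t, dist (clamp t) pa < δ := by
        intro t
        rw [Subtype.dist_eq]
        show dist (min (max (t : ℝ) a) b) a < δ
        rw [Real.dist_eq]
        have h1 : a ≤ min (max (t : ℝ) a) b := le_min (le_max_right _ _) hab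
        have h2 : min (max (t : ℝ) a) b ≤ b := min_le_right _ _
        have h3 : |min (max ((t:ℝ)) a) b - a| ≤ b - a := abs_le.mpr ⟨by linarith, by linarith⟩
        linarith
      have hclose : ∀ t, ‖Q (clamp t) - Q pa‖ ≤ 1/2 := by
        intro t
        have := hδ (hdistc t)
        rw [dist_eq_norm] at this
        exact le_of_lt this
      set w : Set.Icc (0:ℝ) 1 → Cn n := fun t => Q (clamp t) c with hw
      have hwc : Continuous w := (hQ.comp hclampc).clm_apply continuous_const
      have hwnorm : ∀ t, (1:ℝ)/2 ≤ ‖w t‖ := by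
        intro t
        have h1 : ‖w t - c‖ ≤ 1/2 := by
          have he : w t - c = (Q (clamp t) - Q pa) c := by
            show Q (clamp t) c - c = _
            rw [ContinuousLinearMap.sub_apply, hc2]
          rw [he]
          calc ‖(Q (clamp t) - Q pa) c‖ ≤ ‖Q (clamp t) - Q pa‖ * ‖c‖ :=
            (Q (clamp t) - Q pa).le_opNorm c
          _ ≤ 1/2 := by rw [hc1, mul_one]; exact hclose t
        have h2 : ‖c‖ - ‖w t‖ ≤ ‖w t - c‖ := by
          have h4 := norm_sub_norm_le c (w t)
          rwa [norm_sub_rev c (w t)] at h4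
        linarith
      have hwne : ∀ t, w t ≠ 0 := fun t h => by
        have h5 := hwnorm t
        rw [h] at h5
        norm_num at h5
      have hwnne : ∀ t, ((‖w t‖ : ℝ) : ℂ) ≠ 0 := fun t =>
        Complex.ofReal_ne_zero.mpr (fun h => hwne t (norm_eq_zero.mp h))
      set g : Set.Icc (0:ℝ) 1 → Cn n := fun t => ((‖w t‖ : ℝ) : ℂ)⁻¹ • w t with hg
      have hgc : Continuous g := by
        exact ((Complex.continuous_ofReal.comp hwc.norm).inv₀ hwnne).smul hwc
      have hgnorm : ∀ t, ‖g t‖ = 1 := by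
        intro t
        show ‖((‖w t‖ : ℝ) : ℂ)⁻¹ • w t‖ = 1
        rw [norm_smul, norm_inv, Complex.norm_real, Real.norm_eq_abs,
          _root_.abs_of_nonneg (norm_nonneg (w t))]
        exact inv_mul_cancel₀ (fun h => hwne t (norm_eq_zero.mp h))
      have hgpa : g pa = c := by
        have hwpa : w pa = c := by
          show Q (clamp pa) c = c
          rw [hclamp_pa, hc2]
        show ((‖w pa‖ : ℝ) : ℂ)⁻¹ • w pa = c
        rw [hwpa, hc1]
        norm_num
      refine ⟨fun t => if (t : ℝ) ≤ a then v t else g t, ?_, ?_⟩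
      · apply Continuous.if_le hvc hgc continuous_subtype_val continuous_const
        intro t ht
        have hteq : t = pa := Subtype.ext ht
        rw [hteq, hgpa, ← hc]
      · intro t ht
        by_cases hta : (t : ℝ) ≤ a
        · simp only [if_pos hta]
          exact hvp t hta
        · simp only [if_neg hta]
          push_neg at hta
          have hclampt : clamp t = t := by
            apply Subtype.ext
            show min (max ((t:ℝ)) a) b = (t : ℝ)
            rw [max_eq_left (le_of_lt hta), min_eq_left (by rw [hb]; push_cast at ht ⊢; exact ht)]
          have hwt : w t = Q t c := by
            show Q (clamp t) c = Q t c
            rw [hclampt]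
          refine ⟨hgnorm t, ?_⟩
          show Q t (((‖w t‖ : ℝ) : ℂ)⁻¹ • w t) = ((‖w t‖ : ℝ) : ℂ)⁻¹ • w t
          rw [_root_.map_smul, hwt, hfix t c]
  obtain ⟨v, hvc, hvp⟩ := main (N + 1) (by rw [hNr]; push_cast; linarith)
  refine ⟨v, hvc, fun t => hvp t ?_⟩
  have : ((N : ℝ) + 1) / Nr = 1 := by rw [hNr]; field_simp
  push_cast
  rw [this]
  exact t.2.2

end CES

open CES Module in
/-- **Continuous selection of eigenvectors.** Let `t ↦ A_t` be a norm-continuous family of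
Hermitian positive-semidefinite operators on `ℂⁿ` such that for each `t` the nonzero
eigenvalues of `A_t` are exactly the pairwise distinct values `μ₁(t) > ⋯ > μ_m(t) > 0`
(each simple, i.e. the rank of `A_t` is `m`). Then there is a continuous choice of
orthonormal eigenvectors `v₁(t), …, v_m(t)` with `A_t v_k(t) = μ_k(t) v_k(t)`. -/
theorem continuous_eigenvector_selection {n m : ℕ}
    (A : Set.Icc (0 : ℝ) 1 → (Cn n →L[ℂ] Cn n))
    (hA : Continuous A) (hpos : ∀ t, (A t).IsPositive)
    (mu : Set.Icc (0 : ℝ) 1 → Fin m → ℝ)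
    (hmupos : ∀ t k, 0 < mu t k)
    (hmudec : ∀ t, ∀ k l : Fin m, k < l → mu t l < mu t k)
    (heig : ∀ t, ∀ c : ℂ, c ≠ 0 →
      ((∃ x : Cn n, x ≠ 0 ∧ A t x = c • x) ↔ ∃ k, c = (mu t k : ℂ)))
    (hrank : ∀ t, Module.finrank ℂ (LinearMap.range (A t : Cn n →ₗ[ℂ] Cn n)) = m) :
    ∃ v : Fin m → Set.Icc (0 : ℝ) 1 → Cn n,
      (∀ k, Continuous (v k)) ∧
      ∀ t, Orthonormal ℂ (fun k => v k t) ∧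
        ∀ k, A t (v k t) = (mu t k : ℂ) • v k t := by
  classical
  have hsymm : ∀ t, LinearMap.IsSymmetric ((A t : Cn n →ₗ[ℂ] Cn n)) := fun t =>
    ContinuousLinearMap.isSelfAdjoint_iff_isSymmetric.mp (hpos t).isSelfAdjoint
  have hdist : ∀ t, ∀ j l : Fin m, j ≠ l → mu t j ≠ mu t l := by
    intro t j l hjl
    rcases lt_or_gt_of_ne hjl with h | h
    · exact (hmudec t j l h).ne'
    · exact (hmudec t l j h).ne
  have heig1 : ∀ t, ∀ c : ℂ, c ≠ 0 → (∃ x : Cn n, x ≠ 0 ∧ A t x = c • x) →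
      ∃ j, c = ((mu t j : ℝ) : ℂ) := fun t c hc h => (heig t c hc).mp h
  have heig2 : ∀ t k, ∃ x : Cn n, x ≠ 0 ∧ A t x = ((mu t k : ℝ) : ℂ) • x := fun t k =>
    (heig t (mu t k) (by exact_mod_cast (hmupos t k).ne')).mpr ⟨k, rfl⟩
  have hclass : ∀ t, ∀ i, ev (A t) (hsymm t) i = 0 ∨ ∃ j, ev (A t) (hsymm t) i = mu t j :=
    fun t => classify (hsymm t) (heig1 t)
  have hne : ∀ t k, scalarAt (mu t) k (mu t k) ≠ 0 := fun t k =>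
    scalarAt_base_ne_zero (hmupos t k) (fun j hjk => hdist t j k hjk)
  have hmucont : ∀ k, Continuous fun t => mu t k := by
    intro k
    rw [continuous_iff_continuousAt]
    intro t0
    rw [ContinuousAt, Metric.tendsto_nhds]
    intro ε hε
    obtain ⟨gap, hgap0, hgap1, hgap2⟩ :=
      exists_gap (mu t0) (hmupos t0) (hmudec t0) k.pos
    have htd : Filter.Tendsto (fun t => ‖A t - A t0‖) (nhds t0) (nhds 0) := by
      have h := (Continuous.norm (hA.sub (continuous_const (y := A t0)))).tendsto t0
      have h9 : ‖A t0 - A t0‖ = (0:ℝ) := by rw [sub_self, norm_zero]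
      simp only [Pi.sub_apply] at h
      rw [h9] at h
      exact h
    have hev : ∀ᶠ t in nhds t0, ‖A t - A t0‖ < min ε (gap / 4) := by
      apply htd.eventually_lt_const
      rw [lt_min_iff]
      exact ⟨hε, by linarith⟩
    filter_upwards [hev] with t htb
    rw [Real.dist_eq, abs_sub_comm]
    have hsmall : 3 * ‖A t0 - A t‖ < gap := by
      rw [norm_sub_rev]
      have := lt_of_lt_of_le htb (min_le_right _ _)
      linarith
    have key := eig_close (hsymm t) (hmupos t0) (hmudec t) (hmudec t0) (heig2 t0) (heig1 t)
      hgap1 hgap2 hsmall k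
    calc |mu t0 k - mu t k| ≤ ‖A t0 - A t‖ := key
    _ = ‖A t - A t0‖ := norm_sub_rev _ _
    _ < ε := lt_of_lt_of_le htb (min_le_left _ _)
  set Q : Fin m → Set.Icc (0:ℝ) 1 → Cn n →L[ℂ] Cn n := fun k t => lagProj (A t) (mu t) k
    with hQdef
  have hQc : ∀ k, Continuous (Q k) := fun k =>
    lagProj_continuous A mu k hA hmucont (fun t => hne t k)
  have hTQ : ∀ k t, A t ∘L Q k t = ((mu t k : ℝ) : ℂ) • Q k t := fun k t =>
    T_comp_lagProj (hsymm t) (hclass t) (hdist t)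
  have hQfix : ∀ k t x, Q k t (Q k t x) = Q k t x := fun k t x =>
    lagProj_idem (hsymm t) (hclass t) (hdist t) (hne t k) x
  have hAQ : ∀ k t x, A t (Q k t x) = ((mu t k : ℝ) : ℂ) • Q k t x := fun k t x => by
    have := congrArg (fun S : Cn n →L[ℂ] Cn n => S x) (hTQ k t)
    simpa using this
  have hv : ∀ k : Fin m, ∃ v : Set.Icc (0:ℝ) 1 → Cn n, Continuous v ∧
      ∀ t, ‖v t‖ = 1 ∧ Q k t (v t) = v t := by
    intro k
    obtain ⟨x, hx0, hx⟩ := heig2 ⟨0, by norm_num⟩ k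
    have hxn : ((‖x‖ : ℝ) : ℂ) ≠ 0 := Complex.ofReal_ne_zero.mpr (norm_ne_zero_iff.mpr hx0)
    set u₀ : Cn n := ((‖x‖ : ℝ) : ℂ)⁻¹ • x with hu₀def
    have hu₀ : ‖u₀‖ = 1 := by
      rw [hu₀def, norm_smul, norm_inv, Complex.norm_real, Real.norm_eq_abs,
        _root_.abs_of_nonneg (norm_nonneg x)]
      exact inv_mul_cancel₀ (norm_ne_zero_iff.mpr hx0)
    have hu₀e : A ⟨0, by norm_num⟩ u₀ = ((mu ⟨0, by norm_num⟩ k : ℝ) : ℂ) • u₀ := by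
      rw [hu₀def, _root_.map_smul, hx, smul_comm]
    have hQu₀ : Q k ⟨0, by norm_num⟩ u₀ = u₀ := lagProj_fix (hne _ k) hu₀e
    exact glue (Q k) (hQc k) (hQfix k) u₀ hu₀ hQu₀
  choose v hvc hvp using hv
  refine ⟨v, hvc, ?_⟩
  intro t
  have heigv : ∀ k, A t (v k t) = ((mu t k : ℝ) : ℂ) • v k t := by
    intro k
    conv_lhs => rw [← (hvp k t).2]
    rw [hAQ k t (v k t), (hvp k t).2]
  refine ⟨?_, heigv⟩
  rw [orthonormal_iff_ite]
  intro k l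
  by_cases hkl : k = l
  · subst hkl
    rw [if_pos rfl, inner_self_eq_norm_sq_to_K, (hvp k t).1]
    norm_num
  · rw [if_neg hkl]
    have hsym := hsymm t (v k t) (v l t)
    simp only [ContinuousLinearMap.coe_coe] at hsym
    rw [heigv k, heigv l, inner_smul_left, inner_smul_right, Complex.conj_ofReal] at hsym
    have hmune : ((mu t k : ℝ) : ℂ) ≠ ((mu t l : ℝ) : ℂ) := by
      exact_mod_cast hdist t k l hkl
    have h7 : (((mu t k : ℝ) : ℂ) - ((mu t l : ℝ) : ℂ)) * (inner ℂ (v k t) (v l t) : ℂ) = 0 := by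
      linear_combination hsym
    exact (mul_eq_zero.mp h7).resolve_left (sub_ne_zero.mpr hmune)
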